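/- Let G be a finite connected graph with |E(G)| > ν₂(G) and ν₂(G) ≥ 5, and let R be a maximum 2-packing of G (that is, |R| = ν₂(G)). If the subgraph G[R] is connected, then γ(G) ≤ ν₂(G) − 2. -/

import Mathlib

/-- A dominating set: every vertex is in `D` or adjacent to a vertex of `D`. -/
def IsDominatingSet {V : Type*} (G : SimpleGraph V) (D : Finset V) : Prop :=
  ∀ v : V, v ∈ D ∨ ∃ u ∈ D, G.Adj u v

/-- The domination number `γ(G)`: minimum cardinality of a dominating set. -/
noncomputable def dominationNumber {V : Type*} [Fintype V] (G : SimpleGraph V) : ℕ :=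
  sInf {n | ∃ D : Finset V, IsDominatingSet G D ∧ D.card = n}

/-- A 2-packing: a set of edges of `G` such that no three (pairwise distinct)
edges share a common vertex. -/
def IsTwoPacking {V : Type*} (G : SimpleGraph V) (R : Finset (Sym2 V)) : Prop :=
  (↑R : Set (Sym2 V)) ⊆ G.edgeSet ∧
  ∀ e₁ ∈ R, ∀ e₂ ∈ R, ∀ e₃ ∈ R, ∀ v : V,
    v ∈ e₁ → v ∈ e₂ → v ∈ e₃ → (e₁ = e₂ ∨ e₁ = e₃ ∨ e₂ = e₃)

/-- The 2-packing number `ν₂(G)`: maximum cardinality of a 2-packing. -/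
noncomputable def twoPackingNumber {V : Type*} [Fintype V] (G : SimpleGraph V) : ℕ :=
  sSup {n | ∃ R : Finset (Sym2 V), IsTwoPacking G R ∧ R.card = n}

/-- The edge-induced subgraph `G[R]`: its vertices are the endpoints of the
edges of `R` (that are edges of `G`), and its edges are the edges of `R`. -/
def edgeInducedSubgraph {V : Type*} (G : SimpleGraph V) (R : Set (Sym2 V)) : G.Subgraph where
  verts := {v | ∃ e ∈ R ∩ G.edgeSet, v ∈ e}
  Adj a b := s(a, b) ∈ R ∧ G.Adj a b
  adj_sub h := h.2
  edge_vert h := ⟨s(_, _), ⟨h.1, h.2⟩, Sym2.mem_mk_left _ _⟩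
  symm := ⟨fun a b h => ⟨by rw [Sym2.eq_swap]; exact h.1, h.2.symm⟩⟩

open Finset

section aux
variable {V : Type*} [DecidableEq V] {G : SimpleGraph V} {R : Finset (Sym2 V)}

/-- number of edges of `R` containing `v`. -/
def degE (R : Finset (Sym2 V)) (v : V) : ℕ := (R.filter (fun e => v ∈ e)).card

lemma degE_le_two (hR : IsTwoPacking G R) (v : V) : degE R v ≤ 2 := by
  by_contra h
  push_neg at h
  obtain ⟨a, b, c, ha, hb, hc, hab, hac, hbc⟩ := Finset.two_lt_card_iff.mp h
  simp only [mem_filter] at ha hb hc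
  rcases hR.2 a ha.1 b hb.1 c hc.1 v ha.2 hb.2 hc.2 with h | h | h
  exacts [hab h, hac h, hbc h]

lemma isTwoPacking_of_degE (hsub : (↑R : Set (Sym2 V)) ⊆ G.edgeSet)
    (h : ∀ v, degE R v ≤ 2) : IsTwoPacking G R := by
  refine ⟨hsub, fun e₁ h₁ e₂ h₂ e₃ h₃ v hv₁ hv₂ hv₃ => ?_⟩
  by_contra hcon
  push_neg at hcon
  have : 2 < degE R v := by
    apply Finset.two_lt_card_iff.mpr
    exact ⟨e₁, e₂, e₃, mem_filter.mpr ⟨h₁, hv₁⟩, mem_filter.mpr ⟨h₂, hv₂⟩,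
      mem_filter.mpr ⟨h₃, hv₃⟩, hcon.1, hcon.2.1, hcon.2.2⟩
  exact absurd (h v) (by omega)

lemma card_le_nu [Fintype V] {R' : Finset (Sym2 V)} (h : IsTwoPacking G R') :
    R'.card ≤ twoPackingNumber G := by
  apply le_csSup
  · refine ⟨(Finset.univ : Finset (Sym2 V)).card, fun n hn => ?_⟩
    obtain ⟨S, _, rfl⟩ := hn
    exact Finset.card_le_univ S
  · exact ⟨R', h, rfl⟩

end aux
set_option linter.unusedSectionVars false

section aux2
open Finset
variable {V : Type*} [DecidableEq V] {G : SimpleGraph V} {R : Finset (Sym2 V)}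

lemma filter_mem_eq_pair {e : Sym2 V} {x y : V} (hxy : x ≠ y) (he : e = s(x, y)) [Fintype V] :
    Finset.univ.filter (fun v => v ∈ e) = {x, y} := by
  ext v
  simp [he, Sym2.mem_iff, Finset.mem_insert, hxy]

lemma handshake [Fintype V] (hsub : (↑R : Set (Sym2 V)) ⊆ G.edgeSet) :
    ∑ v : V, degE R v = 2 * R.card := by
  unfold degE
  have : ∑ v : V, (R.filter (fun e => v ∈ e)).card
      = ∑ e ∈ R, (Finset.univ.filter (fun v : V => v ∈ e)).card := by
    simp only [Finset.card_filter]
    rw [Finset.sum_comm]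
  rw [this]
  rw [Finset.sum_congr rfl (fun e he => ?_), Finset.sum_const, smul_eq_mul, mul_comm]
  obtain ⟨⟨x, y⟩, rfl⟩ := e.exists_rep
  have hadj : G.Adj x y := (SimpleGraph.mem_edgeSet G).mp (hsub he)
  rw [filter_mem_eq_pair hadj.ne rfl, Finset.card_insert_of_notMem (by simp [hadj.ne]),
    Finset.card_singleton]

lemma connected_card_le {W : Type*} [Fintype W] [DecidableEq W] {H : SimpleGraph W}
    [DecidableRel H.Adj] (hc : H.Connected) :
    Fintype.card W ≤ H.edgeFinset.card + 1 := by
  have hne : Nonempty W := hc.nonempty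
  obtain ⟨u0⟩ := hne
  have key : ∀ w : W, ∃ x, w ≠ u0 → H.Adj w x ∧ H.dist x u0 < H.dist w u0 := by
    intro w
    by_cases hw : w = u0
    · exact ⟨u0, fun h => absurd hw h⟩
    · obtain ⟨p, hp⟩ := hc.exists_walk_length_eq_dist w u0
      have hd : 0 < H.dist w u0 := hc.pos_dist_of_ne hw
      have hnil : ¬ p.Nil := by
        rw [SimpleGraph.Walk.nil_iff_length_eq]
        omega
      refine ⟨p.getVert 1, fun _ => ⟨p.adj_snd hnil, ?_⟩⟩
      have ht := SimpleGraph.Walk.length_tail_add_one hnil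
      have : H.dist (p.getVert 1) u0 ≤ p.tail.length := SimpleGraph.dist_le _
      omega
  choose f hf using key
  have hinj : Set.InjOn (fun w => s(w, f w)) ((Finset.univ.erase u0 : Finset W) : Set W) := by
    intro a ha b hb hab
    simp only [Finset.coe_erase, Set.mem_diff, Finset.mem_coe] at ha hb
    have ha' := hf a (by simpa using ha)
    have hb' := hf b (by simpa using hb)
    simp only [Sym2.eq, Sym2.rel_iff', Prod.mk.injEq, Prod.swap_prod_mk] at hab
    rcases hab with ⟨h1, h2⟩ | ⟨h1, h2⟩
    · exact h1
    · rw [h2] at ha'; rw [← h1] at hb'; omega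
  have hmap : ∀ w ∈ (Finset.univ.erase u0 : Finset W), s(w, f w) ∈ H.edgeFinset := by
    intro w hw
    rw [SimpleGraph.mem_edgeFinset, SimpleGraph.mem_edgeSet]
    exact (hf w (by simpa using hw)).1
  have := Finset.card_le_card_of_injOn _ hmap hinj
  rw [Finset.card_erase_of_mem (Finset.mem_univ u0)] at this
  have hcard : 0 < Fintype.card W := Fintype.card_pos_iff.mpr ⟨u0⟩
  simp only [Finset.card_univ] at this
  omega

end aux2
section aux3
open Finset
variable {V : Type*} [DecidableEq V] {G : SimpleGraph V} {R : Finset (Sym2 V)}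

lemma closure_lemma (hRconn : (edgeInducedSubgraph G ↑R).Connected)
    (T : Set V) (hclosed : ∀ e ∈ R, (∃ v ∈ e, v ∈ T) → ∀ v ∈ e, v ∈ T)
    {t c : V} (ht : t ∈ (edgeInducedSubgraph G ↑R).verts) (htT : t ∈ T)
    (hc : c ∈ (edgeInducedSubgraph G ↑R).verts) : c ∈ T := by
  set H := edgeInducedSubgraph G ↑R with hH
  have hreach := hRconn.preconnected ⟨t, ht⟩ ⟨c, hc⟩
  obtain ⟨w⟩ := hreach
  have main : ∀ (a b : H.verts) (w : H.coe.Walk a b), (a : V) ∈ T → (b : V) ∈ T := by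
    intro a b w
    induction w with
    | nil => exact id
    | cons hadj p ih =>
      intro hu
      apply ih
      have hadj' := hadj
      rw [SimpleGraph.Subgraph.coe_adj] at hadj'
      simp only [H] at hadj'
      have hmem : s(_, _) ∈ R := hadj'.1
      exact hclosed _ hmem ⟨_, Sym2.mem_mk_left _ _, hu⟩ _ (Sym2.mem_mk_right _ _)
  exact main _ _ w htT

lemma two_le_degE {f₁ f₂ : Sym2 V} {v : V} (h₁ : f₁ ∈ R) (h₂ : f₂ ∈ R) (hne : f₁ ≠ f₂)
    (hv₁ : v ∈ f₁) (hv₂ : v ∈ f₂) : 2 ≤ degE R v := by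
  have hsub : ({f₁, f₂} : Finset (Sym2 V)) ⊆ R.filter (fun e => v ∈ e) := by
    intro e he
    rcases Finset.mem_insert.mp he with rfl | he
    · exact Finset.mem_filter.mpr ⟨h₁, hv₁⟩
    · rw [Finset.mem_singleton] at he; subst he
      exact Finset.mem_filter.mpr ⟨h₂, hv₂⟩
  calc 2 = ({f₁, f₂} : Finset (Sym2 V)).card := (Finset.card_pair hne).symm
    _ ≤ _ := Finset.card_le_card hsub

lemma not_pack_of_card [Fintype V] {R' : Finset (Sym2 V)} (h : twoPackingNumber G < R'.card) :
    ¬ IsTwoPacking G R' := fun hp => absurd (card_le_nu hp) (by omega)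

lemma exists_degE_two [Fintype V] (hR : IsTwoPacking G R) (hmax : R.card = twoPackingNumber G)
    {x y : V} (hadj : G.Adj x y) (hne : s(x, y) ∉ R) :
    degE R x = 2 ∨ degE R y = 2 := by
  have hcard : twoPackingNumber G < (insert s(x, y) R).card := by
    rw [Finset.card_insert_of_notMem hne]; omega
  have hnp := not_pack_of_card (G := G) hcard
  rw [IsTwoPacking] at hnp
  push_neg at hnp
  have hsub : (↑(insert s(x, y) R) : Set (Sym2 V)) ⊆ G.edgeSet := by
    intro e he
    simp only [Finset.coe_insert, Set.mem_insert_iff] at he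
    rcases he with rfl | he
    · exact hadj
    · exact hR.1 he
  obtain ⟨e₁, h₁, e₂, h₂, e₃, h₃, v, hv₁, hv₂, hv₃, hne12, hne13, hne23⟩ := hnp hsub
  -- extract: two distinct elements of R containing v, and v ∈ s(x,y)
  have key : ∃ f₁ ∈ R, ∃ f₂ ∈ R, f₁ ≠ f₂ ∧ v ∈ f₁ ∧ v ∈ f₂ ∧ v ∈ s(x, y) := by
    rcases Finset.mem_insert.mp h₁ with rfl | h₁'
    · rcases Finset.mem_insert.mp h₂ with rfl | h₂'
      · exact absurd rfl hne12
      · rcases Finset.mem_insert.mp h₃ with rfl | h₃'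
        · exact absurd rfl hne13
        · exact ⟨e₂, h₂', e₃, h₃', hne23, hv₂, hv₃, hv₁⟩
    · rcases Finset.mem_insert.mp h₂ with rfl | h₂'
      · rcases Finset.mem_insert.mp h₃ with rfl | h₃'
        · exact absurd rfl hne23
        · exact ⟨e₁, h₁', e₃, h₃', hne13, hv₁, hv₃, hv₂⟩
      · rcases Finset.mem_insert.mp h₃ with rfl | h₃'
        · exact ⟨e₁, h₁', e₂, h₂', hne12, hv₁, hv₂, hv₃⟩
        · rcases hR.2 e₁ h₁' e₂ h₂' e₃ h₃' v hv₁ hv₂ hv₃ with h | h | h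
          exacts [absurd h hne12, absurd h hne13, absurd h hne23]
  obtain ⟨f₁, hf₁, f₂, hf₂, hfne, hvf₁, hvf₂, hvxy⟩ := key
  have h2 : degE R v = 2 :=
    le_antisymm (degE_le_two hR v) (two_le_degE hf₁ hf₂ hfne hvf₁ hvf₂)
  rcases Sym2.mem_iff.mp hvxy with rfl | rfl
  · exact Or.inl h2
  · exact Or.inr h2

end aux3
section aux4
open Finset
variable {V : Type*} [DecidableEq V] {G : SimpleGraph V} {R S : Finset (Sym2 V)}
  {g f e e₁ e₂ : Sym2 V} {v w : V}

lemma degE_insert_le : degE (insert g S) w ≤ degE S w + 1 := by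
  unfold degE
  rw [Finset.filter_insert]
  split
  · exact Finset.card_insert_le _ _
  · omega

lemma degE_insert_of_not_mem (h : w ∉ g) : degE (insert g S) w = degE S w := by
  unfold degE
  rw [Finset.filter_insert, if_neg h]

lemma degE_erase_le : degE (S.erase f) w ≤ degE S w := by
  unfold degE
  exact Finset.card_le_card (Finset.filter_subset_filter _ (Finset.erase_subset _ _))

lemma degE_erase_eq (hf : f ∈ S) (hw : w ∈ f) :
    degE (S.erase f) w + 1 = degE S w := by
  unfold degE
  rw [Finset.filter_erase]
  rw [Finset.card_erase_of_mem (Finset.mem_filter.mpr ⟨hf, hw⟩)]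
  have : 0 < (S.filter (fun e => w ∈ e)).card :=
    Finset.card_pos.mpr ⟨f, Finset.mem_filter.mpr ⟨hf, hw⟩⟩
  omega

lemma degE_union_le {A B : Finset (Sym2 V)} : degE (A ∪ B) w ≤ degE A w + degE B w := by
  unfold degE
  rw [Finset.filter_union]
  exact Finset.card_union_le _ _

lemma degE_pos_of_mem (he : e ∈ R) (hv : v ∈ e) : 0 < degE R v :=
  Finset.card_pos.mpr ⟨e, Finset.mem_filter.mpr ⟨he, hv⟩⟩

lemma sym2_eq_of_mem (hx : v ∈ e) (hy : w ∈ e) (hxy : v ≠ w) : e = s(v, w) :=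
  (Sym2.mem_and_mem_iff hxy).mp ⟨hx, hy⟩

lemma edges_at (hdeg : degE R v ≤ 2) (h₁ : e₁ ∈ R) (h₂ : e₂ ∈ R) (hne : e₁ ≠ e₂)
    (hv₁ : v ∈ e₁) (hv₂ : v ∈ e₂) : ∀ e ∈ R, v ∈ e → e = e₁ ∨ e = e₂ := by
  intro e he hv
  by_contra hcon
  push_neg at hcon
  have : 2 < degE R v := by
    apply Finset.two_lt_card_iff.mpr
    exact ⟨e, e₁, e₂, Finset.mem_filter.mpr ⟨he, hv⟩, Finset.mem_filter.mpr ⟨h₁, hv₁⟩,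
      Finset.mem_filter.mpr ⟨h₂, hv₂⟩, hcon.1, hcon.2, hne⟩
  omega

lemma edges_at_deg1 (hdeg : degE R v = 1) (h₁ : e₁ ∈ R) (hv₁ : v ∈ e₁) :
    ∀ e ∈ R, v ∈ e → e = e₁ := by
  intro e he hv
  have := Finset.card_le_one.mp (le_of_eq hdeg) e
    (Finset.mem_filter.mpr ⟨he, hv⟩) e₁ (Finset.mem_filter.mpr ⟨h₁, hv₁⟩)
  exact this

/-- given v ∈ e and e in an edge set of G, get the other endpoint -/
lemma other_endpoint (hR : IsTwoPacking G R) (he : e ∈ R) (hv : v ∈ e) :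
    ∃ a, a ≠ v ∧ e = s(v, a) ∧ G.Adj v a := by
  obtain ⟨⟨x, y⟩, rfl⟩ := e.exists_rep
  have hadj : G.Adj x y := (SimpleGraph.mem_edgeSet G).mp (hR.1 (Finset.mem_coe.mpr he))
  rcases Sym2.mem_iff.mp hv with rfl | rfl
  · exact ⟨y, hadj.ne', rfl, hadj⟩
  · exact ⟨x, hadj.ne, Sym2.eq_swap, hadj.symm⟩

/-- two distinct incident edges of a degree-2 vertex, as neighbors -/
lemma deg2_nbrs (hR : IsTwoPacking G R) (hdeg : degE R v = 2) :
    ∃ a b : V, a ≠ b ∧ s(v, a) ∈ R ∧ s(v, b) ∈ R ∧ G.Adj v a ∧ G.Adj v b ∧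
      (∀ e ∈ R, v ∈ e → e = s(v, a) ∨ e = s(v, b)) := by
  obtain ⟨f₁, f₂, hne, hpair⟩ := Finset.card_eq_two.mp hdeg
  have h₁ : f₁ ∈ R.filter (fun e => v ∈ e) := by rw [hpair]; simp
  have h₂ : f₂ ∈ R.filter (fun e => v ∈ e) := by rw [hpair]; simp
  rw [Finset.mem_filter] at h₁ h₂
  obtain ⟨a, hav, hfa, hadja⟩ := other_endpoint hR h₁.1 h₁.2
  obtain ⟨b, hbv, hfb, hadjb⟩ := other_endpoint hR h₂.1 h₂.2
  refine ⟨a, b, ?_, hfa ▸ h₁.1, hfb ▸ h₂.1, hadja, hadjb, ?_⟩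
  · intro hcon
    exact hne (by rw [hfa, hfb, hcon])
  · intro e he hv
    have : e ∈ ({f₁, f₂} : Finset (Sym2 V)) := by
      rw [← hpair]; exact Finset.mem_filter.mpr ⟨he, hv⟩
    rcases Finset.mem_insert.mp this with rfl | h
    · left; exact hfa
    · right; rw [Finset.mem_singleton] at h; subst h; exact hfb

end aux4
section main
open Finset
variable {V : Type*}

lemma exists_dom [Fintype V] [DecidableEq V] {G : SimpleGraph V} {R : Finset (Sym2 V)}
    (hconn : G.Connected) (hR : IsTwoPacking G R)
    (hmax : R.card = twoPackingNumber G) (h5 : 5 ≤ R.card)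
    (hRconn : (edgeInducedSubgraph G ↑R).Connected) :
    ∃ D : Finset V, IsDominatingSet G D ∧ D.card ≤ R.card - 2 := by
  classical
  set k := R.card with hk
  clear_value k
  have hmax' : R.card = twoPackingNumber G := hk ▸ hmax
  have hdeg2 : ∀ v, degE R v ≤ 2 := degE_le_two hR
  have hvert : ∀ v, v ∈ (edgeInducedSubgraph G ↑R).verts ↔ 0 < degE R v := by
    intro v
    constructor
    · intro hv'
      obtain ⟨e, he, hv⟩ : ∃ e ∈ (↑R : Set (Sym2 V)) ∩ G.edgeSet, v ∈ e := hv'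
      exact degE_pos_of_mem (Finset.mem_coe.mp ((Set.mem_inter_iff _ _ _).mp he).1) hv
    · intro h
      obtain ⟨e, he⟩ := Finset.card_pos.mp h
      rw [Finset.mem_filter] at he
      exact (show ∃ e ∈ (↑R : Set (Sym2 V)) ∩ G.edgeSet, v ∈ e from
        ⟨e, Set.mem_inter (Finset.mem_coe.mpr he.1) (hR.1 (Finset.mem_coe.mpr he.1)), he.2⟩)
  set LF := Finset.univ.filter (fun v => degE R v = 1) with hLF
  set IntF := Finset.univ.filter (fun v => degE R v = 2) with hIntF
  set CF := Finset.univ.filter (fun v => 0 < degE R v) with hCF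
  -- handshake and counting
  have hsum : LF.card + 2 * IntF.card = 2 * k := by
    have hh := handshake (R := R) hR.1
    have h1 : ∑ v ∈ LF, degE R v = LF.card := by
      rw [Finset.sum_congr rfl (fun v hv => (Finset.mem_filter.mp hv).2)]
      simp [hLF]
    have h2 : ∑ v ∈ IntF, degE R v = 2 * IntF.card := by
      rw [Finset.sum_congr rfl (fun v hv => (Finset.mem_filter.mp hv).2)]
      simp [mul_comm, hIntF]
    have hdisj : Disjoint LF IntF := by
      rw [Finset.disjoint_left]
      intro a ha ha'
      rw [hLF, Finset.mem_filter] at ha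
      rw [hIntF, Finset.mem_filter] at ha'
      omega
    have hsplit : ∑ v ∈ LF ∪ IntF, degE R v = ∑ v : V, degE R v := by
      apply Finset.sum_subset (Finset.subset_univ _)
      intro x _ hx
      rw [Finset.mem_union, hLF, hIntF, Finset.mem_filter, Finset.mem_filter] at hx
      push_neg at hx
      have := hdeg2 x
      have h1 := hx.1 (Finset.mem_univ x)
      have h2 := hx.2 (Finset.mem_univ x)
      omega
    rw [Finset.sum_union hdisj, h1, h2] at hsplit
    omega
  have hdisj : Disjoint LF IntF := by
    rw [Finset.disjoint_left]
    intro a ha ha'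
    rw [hLF, Finset.mem_filter] at ha
    rw [hIntF, Finset.mem_filter] at ha'
    omega
  have hCFcard : CF.card = LF.card + IntF.card := by
    have : CF = LF ∪ IntF := by
      ext v
      rw [hCF, hLF, hIntF, Finset.mem_filter, Finset.mem_union, Finset.mem_filter,
        Finset.mem_filter]
      have := hdeg2 v
      constructor
      · rintro ⟨h1, h2⟩
        rcases (by omega : degE R v = 1 ∨ degE R v = 2) with h | h
        · exact Or.inl ⟨h1, h⟩
        · exact Or.inr ⟨h1, h⟩
      · rintro (⟨h1, h2⟩ | ⟨h1, h2⟩) <;> exact ⟨h1, by omega⟩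
    rw [this, Finset.card_union_of_disjoint hdisj]
  have hCFle : CF.card ≤ k + 1 := by
    letI : Fintype ↥(edgeInducedSubgraph G ↑R).verts :=
      (Set.toFinite (edgeInducedSubgraph G ↑R).verts).fintype
    letI : DecidableRel (edgeInducedSubgraph G ↑R).coe.Adj := fun a b => Classical.dec _
    have hc : (edgeInducedSubgraph G ↑R).coe.Connected := hRconn
    have h1 := connected_card_le hc
    have h2 : Fintype.card ↥(edgeInducedSubgraph G ↑R).verts = CF.card := by
      rw [← Set.toFinset_card]
      have he : (edgeInducedSubgraph G ↑R).verts.toFinset = CF := by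
        ext v
        rw [Set.mem_toFinset, hvert v, hCF, Finset.mem_filter]
        simp
      rw [he]
    have h3 : (edgeInducedSubgraph G ↑R).coe.edgeFinset.card ≤ R.card := by
      apply Finset.card_le_card_of_injOn (Sym2.map Subtype.val)
      · intro e he
        rw [Finset.mem_coe, SimpleGraph.mem_edgeFinset] at he
        obtain ⟨⟨a, b⟩, rfl⟩ := e.exists_rep
        rw [SimpleGraph.mem_edgeSet] at he
        have h := he.1
        simpa using h
      · exact fun a _ b _ hab => Sym2.map.injective Subtype.val_injective hab
    omega
  have hIle : IntF.card ≤ k := by omega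
  have hCFge : k ≤ CF.card := by omega
  have hLF02 : LF.card = 0 ∨ LF.card = 2 := by omega
  -- closure machinery
  have hclosT : ∀ (T : Finset V), (∀ e ∈ R, (∃ v ∈ e, v ∈ T) → ∀ v ∈ e, v ∈ T) →
      (∃ t ∈ T, 0 < degE R t) → CF.card ≤ T.card := by
    rintro T hcl ⟨t, htT, htd⟩
    apply Finset.card_le_card
    intro c hc
    rw [hCF, Finset.mem_filter] at hc
    have := closure_lemma hRconn (↑T : Set V)
      (fun e he hex v hv => by
        obtain ⟨u, hu, huT⟩ := hex
        exact hcl e he ⟨u, hu, Finset.mem_coe.mp huT⟩ v hv)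
      ((hvert t).mpr htd) (Finset.mem_coe.mpr htT) ((hvert c).mpr hc.2)
    exact Finset.mem_coe.mp this
  -- neighbors of low-degree vertices are of degree 2
  have houtside : ∀ x y, degE R x = 0 → G.Adj x y → degE R y = 2 := by
    intro x y h0 hadj
    have hnotin : s(x, y) ∉ R := by
      intro hmem
      have := degE_pos_of_mem hmem (Sym2.mem_mk_left x y)
      omega
    rcases exists_degE_two hR hmax' hadj hnotin with h | h
    · omega
    · exact h
  have hnbr_exists : ∀ x, degE R x = 0 → ∃ y, G.Adj x y := by
    intro x h0
    have hRne : R.Nonempty := Finset.card_pos.mp (by omega)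
    obtain ⟨e, he⟩ := hRne
    obtain ⟨⟨u, u'⟩, rfl⟩ := e.exists_rep
    have hu : 0 < degE R u := degE_pos_of_mem he (Sym2.mem_mk_left u u')
    have hxu : x ≠ u := by intro h; rw [h] at h0; omega
    obtain ⟨w⟩ := hconn x u
    have hnil : ¬ w.Nil := SimpleGraph.Walk.not_nil_of_ne hxu
    exact ⟨w.getVert 1, w.adj_snd hnil⟩
  have hleaf_nbr : ∀ x y, degE R x = 1 → G.Adj x y → degE R y = 2 := by
    intro x y h1 hadj
    by_cases hmem : s(x, y) ∈ R
    · have hy : 0 < degE R y := degE_pos_of_mem hmem (Sym2.mem_mk_right x y)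
      rcases (by have := hdeg2 y; omega : degE R y = 1 ∨ degE R y = 2) with h | h
      · exfalso
        have hcl : ∀ e ∈ R, (∃ v ∈ e, v ∈ ({x, y} : Finset V)) →
            ∀ v ∈ e, v ∈ ({x, y} : Finset V) := by
          intro e he hex v hv
          obtain ⟨u, hu, huT⟩ := hex
          have : e = s(x, y) := by
            rcases Finset.mem_insert.mp huT with rfl | huT'
            · exact edges_at_deg1 h1 hmem (Sym2.mem_mk_left _ _) e he hu
            · rw [Finset.mem_singleton] at huT'
              subst huT'
              exact edges_at_deg1 h hmem (Sym2.mem_mk_right _ _) e he hu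
          subst this
          rcases Sym2.mem_iff.mp hv with rfl | rfl <;> simp
        have := hclosT {x, y} hcl ⟨x, by simp, by omega⟩
        have hle : ({x, y} : Finset V).card ≤ 2 := Finset.card_insert_le _ _ |>.trans (by simp)
        omega
      · exact h
    · rcases exists_degE_two hR hmax' hadj hmem with h | h
      · omega
      · exact h
  rcases hLF02 with hLF0 | hLF2
  · -- CYCLE CASE: no leaves
    have hLFempty : LF = ∅ := Finset.card_eq_zero.mp hLF0
    have hdeg02 : ∀ v, degE R v = 0 ∨ degE R v = 2 := by
      intro v
      have h2 := hdeg2 v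
      rcases (by omega : degE R v = 0 ∨ degE R v = 1 ∨ degE R v = 2) with h | h | h
      · exact Or.inl h
      · exfalso
        have : v ∈ LF := by rw [hLF, Finset.mem_filter]; exact ⟨Finset.mem_univ v, h⟩
        rw [hLFempty] at this
        exact absurd this (Finset.notMem_empty v)
      · exact Or.inr h
    set S := CF.filter (fun v => ∃ x, degE R x = 0 ∧ G.Adj v x) with hS
    have hSsub : S ⊆ CF := Finset.filter_subset _ _
    have claim1 : ∀ e ∈ R, ¬ (∀ v ∈ e, v ∈ S) := by
      intro e he hall
      obtain ⟨⟨u, v⟩, rfl⟩ := e.exists_rep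
      have hadj : G.Adj u v := (SimpleGraph.mem_edgeSet G).mp (hR.1 (Finset.mem_coe.mpr he))
      have huv : u ≠ v := hadj.ne
      have hu := hall u (Sym2.mem_mk_left u v)
      have hv := hall v (Sym2.mem_mk_right u v)
      rw [hS, Finset.mem_filter] at hu hv
      obtain ⟨x, hx0, hux⟩ := hu.2
      obtain ⟨y, hy0, hvy⟩ := hv.2
      have hu2 : degE R u = 2 := by
        have := degE_pos_of_mem he (Sym2.mem_mk_left u v); have := hdeg02 u; omega
      have hv2 : degE R v = 2 := by
        have := degE_pos_of_mem he (Sym2.mem_mk_right u v); have := hdeg02 v; omega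
      have hyu : y ≠ u := by intro h; rw [h] at hy0; omega
      have hyv : y ≠ v := by intro h; rw [h] at hy0; omega
      have hxu : x ≠ u := by intro h; rw [h] at hx0; omega
      have hxv : x ≠ v := by intro h; rw [h] at hx0; omega
      set B := R.erase s(u, v) with hB
      set R' := insert s(u, x) (insert s(v, y) B) with hR'
      have hnx : s(u, x) ∉ R := by
        intro h; have := degE_pos_of_mem h (Sym2.mem_mk_right u x); omega
      have hny : s(v, y) ∉ R := by
        intro h; have := degE_pos_of_mem h (Sym2.mem_mk_right v y); omega
      have hpack : IsTwoPacking G R' := by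
        apply isTwoPacking_of_degE
        · intro f hf
          rw [hR'] at hf
          simp only [Finset.coe_insert, Set.mem_insert_iff] at hf
          rcases hf with rfl | rfl | hf
          · exact hux
          · exact hvy
          · exact hR.1 (Finset.mem_coe.mpr (Finset.mem_of_mem_erase (Finset.mem_coe.mp hf)))
        · intro w
          have hBle : degE B w ≤ degE R w := degE_erase_le
          by_cases hw1 : w ∈ s(u, x) <;> by_cases hw2 : w ∈ s(v, y)
          · have hwx : w = x := by
              rcases Sym2.mem_iff.mp hw1 with rfl | rfl
              · exfalso
                rcases Sym2.mem_iff.mp hw2 with h | h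
                · exact huv h
                · exact hyu h.symm
              · rfl
            have h1 : degE R' w ≤ degE (insert s(v, y) B) w + 1 := degE_insert_le
            have h2 : degE (insert s(v, y) B) w ≤ degE B w + 1 := degE_insert_le
            rw [hwx] at h1 h2 ⊢
            have h3 : degE B x ≤ degE R x := degE_erase_le
            omega
          · have h1 : degE R' w ≤ degE (insert s(v, y) B) w + 1 := degE_insert_le
            have h2 : degE (insert s(v, y) B) w = degE B w := degE_insert_of_not_mem hw2
            rcases Sym2.mem_iff.mp hw1 with rfl | rfl
            · have h3 : degE B w + 1 = degE R w := degE_erase_eq he (Sym2.mem_mk_left w v)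
              omega
            · have h3 : degE B w ≤ degE R w := degE_erase_le
              omega
          · have h1 : degE R' w = degE (insert s(v, y) B) w := degE_insert_of_not_mem hw1
            have h2 : degE (insert s(v, y) B) w ≤ degE B w + 1 := degE_insert_le
            rcases Sym2.mem_iff.mp hw2 with rfl | rfl
            · have h3 : degE B w + 1 = degE R w := degE_erase_eq he (Sym2.mem_mk_right u w)
              omega
            · have h3 : degE B w ≤ degE R w := degE_erase_le
              omega
          · have h1 : degE R' w = degE (insert s(v, y) B) w := degE_insert_of_not_mem hw1
            have h2 : degE (insert s(v, y) B) w = degE B w := degE_insert_of_not_mem hw2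
            have := hdeg2 w
            omega
      have hc1 : s(v, y) ∉ B := fun h => hny (Finset.mem_of_mem_erase h)
      have hc2 : s(u, x) ∉ insert s(v, y) B := by
        rw [Finset.mem_insert]
        rintro (h | h)
        · rw [Sym2.eq_iff] at h
          rcases h with ⟨h1, h2⟩ | ⟨h1, h2⟩
          · exact huv h1
          · exact hyu (h1.symm)
        · exact hnx (Finset.mem_of_mem_erase h)
      have hcard' : R'.card = k + 1 := by
        rw [hR', Finset.card_insert_of_notMem hc2, Finset.card_insert_of_notMem hc1, hB,
          Finset.card_erase_of_mem he]
        omega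
      have hle := card_le_nu hpack
      omega
    have claim2 : ∃ a ∈ CF, ∃ b ∈ CF, a ≠ b ∧ a ∉ S ∧ b ∉ S := by
      have h2le : 2 ≤ (CF \ S).card := by
        by_contra hlt
        push_neg at hlt
        obtain ⟨e, he, hein⟩ : ∃ e ∈ R, ∀ v ∈ e, v ∈ S := by
          rcases (by omega : (CF \ S).card = 0 ∨ (CF \ S).card = 1) with h0 | h1
          · obtain ⟨e, he⟩ := Finset.card_pos.mp (by omega : 0 < R.card)
            refine ⟨e, he, fun v hv => ?_⟩
            have hvCF : v ∈ CF := by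
              rw [hCF, Finset.mem_filter]
              exact ⟨Finset.mem_univ v, degE_pos_of_mem he hv⟩
            by_contra hvS
            have : v ∈ CF \ S := Finset.mem_sdiff.mpr ⟨hvCF, hvS⟩
            rw [Finset.card_eq_zero.mp h0] at this
            exact absurd this (Finset.notMem_empty v)
          · obtain ⟨z, hz⟩ := Finset.card_eq_one.mp h1
            have hzdeg : degE R z ≤ 2 := hdeg2 z
            have hpos : 0 < (R.filter (fun e => ¬ z ∈ e)).card := by
              have hsplit := Finset.card_filter_add_card_filter_not
                (s := R) (p := fun e => z ∈ e)
              have : (R.filter (fun e => z ∈ e)).card = degE R z := rfl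
              omega
            obtain ⟨e, he'⟩ := Finset.card_pos.mp hpos
            rw [Finset.mem_filter] at he'
            refine ⟨e, he'.1, fun v hv => ?_⟩
            have hvCF : v ∈ CF := by
              rw [hCF, Finset.mem_filter]
              exact ⟨Finset.mem_univ v, degE_pos_of_mem he'.1 hv⟩
            by_contra hvS
            have hmem : v ∈ CF \ S := Finset.mem_sdiff.mpr ⟨hvCF, hvS⟩
            rw [hz, Finset.mem_singleton] at hmem
            subst hmem
            exact he'.2 hv
        exact claim1 e he hein
      obtain ⟨a, ha, b, hb, hab⟩ := Finset.one_lt_card.mp (show 1 < (CF \ S).card by omega)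
      rw [Finset.mem_sdiff] at ha hb
      exact ⟨a, ha.1, b, hb.1, hab, ha.2, hb.2⟩
    obtain ⟨a, haCF, b, hbCF, hab, haS, hbS⟩ := claim2
    have hCFk : CF.card = k := by omega
    refine ⟨CF \ {a, b}, ?_, ?_⟩
    · intro w
      by_cases hwD : w ∈ CF \ {a, b}
      · exact Or.inl hwD
      right
      rcases hdeg02 w with h0 | h2
      · obtain ⟨y, hadj⟩ := hnbr_exists w h0
        have hy2 : degE R y = 2 := houtside w y h0 hadj
        have hyCF : y ∈ CF := by
          rw [hCF, Finset.mem_filter]; exact ⟨Finset.mem_univ y, by omega⟩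
        have hyS : y ∈ S := by
          rw [hS, Finset.mem_filter]
          exact ⟨hyCF, w, h0, hadj.symm⟩
        refine ⟨y, Finset.mem_sdiff.mpr ⟨hyCF, ?_⟩, hadj.symm⟩
        intro hy
        rcases Finset.mem_insert.mp hy with rfl | hy'
        · exact haS hyS
        · rw [Finset.mem_singleton] at hy'
          subst hy'
          exact hbS hyS
      · have hwCF : w ∈ CF := by
          rw [hCF, Finset.mem_filter]; exact ⟨Finset.mem_univ w, by omega⟩
        have hwab : w ∈ ({a, b} : Finset V) := by
          by_contra h
          exact hwD (Finset.mem_sdiff.mpr ⟨hwCF, h⟩)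
        obtain ⟨c, d, hcd, hec, hed, hadjc, hadjd, -⟩ := deg2_nbrs hR h2
        have hcCF : c ∈ CF := by
          rw [hCF, Finset.mem_filter]
          exact ⟨Finset.mem_univ c, degE_pos_of_mem hec (Sym2.mem_mk_right w c)⟩
        have hdCF : d ∈ CF := by
          rw [hCF, Finset.mem_filter]
          exact ⟨Finset.mem_univ d, degE_pos_of_mem hed (Sym2.mem_mk_right w d)⟩
        have hkey : c ∉ ({a, b} : Finset V) ∨ d ∉ ({a, b} : Finset V) := by
          by_contra hcon
          push_neg at hcon
          have hsub2 : ({c, d} : Finset V) ⊆ ({a, b} : Finset V) := by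
            intro z hz
            rcases Finset.mem_insert.mp hz with rfl | hz'
            · exact hcon.1
            · rw [Finset.mem_singleton] at hz'; subst hz'; exact hcon.2
          have hcard2 : ({a, b} : Finset V).card ≤ ({c, d} : Finset V).card := by
            rw [Finset.card_pair hab, Finset.card_pair hcd]
          have heq := Finset.eq_of_subset_of_card_le hsub2 hcard2
          rw [← heq] at hwab
          rcases Finset.mem_insert.mp hwab with rfl | hw'
          · exact hadjc.ne rfl
          · rw [Finset.mem_singleton] at hw'
            exact hadjd.ne hw'
        rcases hkey with h | h
        · exact ⟨c, Finset.mem_sdiff.mpr ⟨hcCF, h⟩, hadjc.symm⟩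
        · exact ⟨d, Finset.mem_sdiff.mpr ⟨hdCF, h⟩, hadjd.symm⟩
    · have hsub : ({a, b} : Finset V) ⊆ CF := by
        intro z hz
        rcases Finset.mem_insert.mp hz with rfl | hz'
        · exact haCF
        · rw [Finset.mem_singleton] at hz'; subst hz'; exact hbCF
      rw [Finset.card_sdiff_of_subset hsub, Finset.card_pair hab, hCFk]
  · -- PATH CASE: two leaves
    have hIcard : IntF.card = k - 1 := by omega
    by_cases hex : ∃ v ∈ IntF, ¬ ∃ x : V, ∀ y, G.Adj x y ↔ y = v
    · obtain ⟨v0, hv0I, hncrit⟩ := hex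
      have hv0deg : degE R v0 = 2 := (Finset.mem_filter.mp hv0I).2
      obtain ⟨c, d, hcd, hec, hed, hadjc, hadjd, hall⟩ := deg2_nbrs hR hv0deg
      have hnbrI : ∃ z, z ∈ IntF ∧ z ≠ v0 ∧ G.Adj v0 z := by
        have hcpos : 0 < degE R c := degE_pos_of_mem hec (Sym2.mem_mk_right v0 c)
        have hdpos : 0 < degE R d := degE_pos_of_mem hed (Sym2.mem_mk_right v0 d)
        by_cases hc2 : degE R c = 2
        · exact ⟨c, Finset.mem_filter.mpr ⟨Finset.mem_univ c, hc2⟩, hadjc.ne', hadjc⟩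
        by_cases hd2 : degE R d = 2
        · exact ⟨d, Finset.mem_filter.mpr ⟨Finset.mem_univ d, hd2⟩, hadjd.ne', hadjd⟩
        exfalso
        have hc1 : degE R c = 1 := by have := hdeg2 c; omega
        have hd1 : degE R d = 1 := by have := hdeg2 d; omega
        have hcl : ∀ e ∈ R, (∃ w ∈ e, w ∈ ({c, v0, d} : Finset V)) →
            ∀ w ∈ e, w ∈ ({c, v0, d} : Finset V) := by
          intro e he hexx w hw
          obtain ⟨u, hu, huT⟩ := hexx
          have heq : e = s(v0, c) ∨ e = s(v0, d) := by
            rcases Finset.mem_insert.mp huT with rfl | huT'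
            · left; exact edges_at_deg1 hc1 hec (Sym2.mem_mk_right _ _) e he hu
            · rcases Finset.mem_insert.mp huT' with rfl | huT''
              · exact hall e he hu
              · rw [Finset.mem_singleton] at huT''
                subst huT''
                right; exact edges_at_deg1 hd1 hed (Sym2.mem_mk_right _ _) e he hu
          rcases heq with rfl | rfl
          · rcases Sym2.mem_iff.mp hw with rfl | rfl <;> simp
          · rcases Sym2.mem_iff.mp hw with rfl | rfl <;> simp
        have h3 := hclosT {c, v0, d} hcl ⟨v0, by simp, by omega⟩
        have hle3 : ({c, v0, d} : Finset V).card ≤ 3 := by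
          apply le_trans (Finset.card_insert_le _ _)
          have : ({v0, d} : Finset V).card ≤ 2 := by
            apply le_trans (Finset.card_insert_le _ _)
            simp
          omega
        omega
      obtain ⟨z0, hz0I, hz0ne, hz0adj⟩ := hnbrI
      refine ⟨IntF.erase v0, ?_, ?_⟩
      · intro w
        by_cases hwD : w ∈ IntF.erase v0
        · exact Or.inl hwD
        right
        by_cases hw2 : degE R w = 2
        · have hwI : w ∈ IntF := Finset.mem_filter.mpr ⟨Finset.mem_univ w, hw2⟩
          have hwv0 : w = v0 := by
            by_contra h
            exact hwD (Finset.mem_erase.mpr ⟨h, hwI⟩)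
          subst hwv0
          exact ⟨z0, Finset.mem_erase.mpr ⟨hz0ne, hz0I⟩, hz0adj.symm⟩
        · have hlow : degE R w = 0 ∨ degE R w = 1 := by have := hdeg2 w; omega
          have hnbr : ∃ y, G.Adj w y := by
            rcases hlow with h0 | h1
            · exact hnbr_exists w h0
            · have hpos : 0 < degE R w := by omega
              obtain ⟨e, he⟩ := Finset.card_pos.mp hpos
              rw [Finset.mem_filter] at he
              obtain ⟨a, -, -, hadj⟩ := other_endpoint hR he.1 he.2
              exact ⟨a, hadj⟩
          have hnbrsI : ∀ y, G.Adj w y → y ∈ IntF := by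
            intro y hy
            rcases hlow with h0 | h1
            · exact Finset.mem_filter.mpr ⟨Finset.mem_univ y, houtside w y h0 hy⟩
            · exact Finset.mem_filter.mpr ⟨Finset.mem_univ y, hleaf_nbr w y h1 hy⟩
          have hyex : ∃ y, G.Adj w y ∧ y ≠ v0 := by
            by_contra hcon
            push_neg at hcon
            apply hncrit
            obtain ⟨y0, hy0⟩ := hnbr
            have hy0v0 : y0 = v0 := hcon y0 hy0
            exact ⟨w, fun y => ⟨fun h => hcon y h, fun h => h ▸ (hy0v0 ▸ hy0)⟩⟩
          obtain ⟨y, hy, hyne⟩ := hyex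
          exact ⟨y, Finset.mem_erase.mpr ⟨hyne, hnbrsI y hy⟩, hy.symm⟩
      · rw [Finset.card_erase_of_mem hv0I, hIcard]
        omega
    · -- all interior vertices critical: build a bigger packing, contradiction
      exfalso
      push_neg at hex
      have hchoice : ∀ v : V, ∃ x : V, v ∈ IntF → ∀ y, G.Adj x y ↔ y = v := by
        intro v
        by_cases hv : v ∈ IntF
        · obtain ⟨x, hx⟩ := hex v hv
          exact ⟨x, fun _ => hx⟩
        · exact ⟨v, fun h => absurd h hv⟩
      choose p hp using hchoice
      have hpadj : ∀ v ∈ IntF, G.Adj (p v) v := fun v hv => ((hp v hv v).mpr rfl)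
      have hpnotI : ∀ v ∈ IntF, p v ∉ IntF := by
        intro v hv hcon
        have h2 : degE R (p v) = 2 := (Finset.mem_filter.mp hcon).2
        obtain ⟨a, b, hab, -, -, ha, hb, -⟩ := deg2_nbrs hR h2
        have ha' : a = v := (hp v hv a).mp ha
        have hb' : b = v := (hp v hv b).mp hb
        exact hab (ha'.trans hb'.symm)
      set E' := R.filter (fun e => ∀ v ∈ e, degE R v = 2) with hE'
      obtain ⟨l₁, l₂, hl12, hLFpair⟩ := Finset.card_eq_two.mp hLF2
      have hE'card : k - 2 ≤ E'.card := by
        have hsplit : E'.card + (R.filter (fun e => ¬ ∀ v ∈ e, degE R v = 2)).card = R.card := by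
          rw [hE']
          exact Finset.card_filter_add_card_filter_not _
        have hsub : R.filter (fun e => ¬ ∀ v ∈ e, degE R v = 2) ⊆
            (R.filter (fun e => l₁ ∈ e)) ∪ (R.filter (fun e => l₂ ∈ e)) := by
          intro e he
          rw [Finset.mem_filter] at he
          have he2 := he.2
          push_neg at he2
          obtain ⟨v, hv, hv2⟩ := he2
          have hvpos : 0 < degE R v := degE_pos_of_mem he.1 hv
          have hv1 : degE R v = 1 := by have := hdeg2 v; omega
          have hvLF : v ∈ LF := Finset.mem_filter.mpr ⟨Finset.mem_univ v, hv1⟩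
          rw [hLFpair] at hvLF
          rcases Finset.mem_insert.mp hvLF with rfl | hv'
          · exact Finset.mem_union_left _ (Finset.mem_filter.mpr ⟨he.1, hv⟩)
          · rw [Finset.mem_singleton] at hv'
            subst hv'
            exact Finset.mem_union_right _ (Finset.mem_filter.mpr ⟨he.1, hv⟩)
        have hbound := Finset.card_le_card hsub
        have hun := Finset.card_union_le (R.filter (fun e => l₁ ∈ e))
          (R.filter (fun e => l₂ ∈ e))
        have hl₁LF : l₁ ∈ LF := by rw [hLFpair]; simp
        have hl₂LF : l₂ ∈ LF := by rw [hLFpair]; simp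
        have hd1 : (R.filter (fun e => l₁ ∈ e)).card = 1 :=
          (Finset.mem_filter.mp hl₁LF).2
        have hd2 : (R.filter (fun e => l₂ ∈ e)).card = 1 :=
          (Finset.mem_filter.mp hl₂LF).2
        omega
      have hdisjpair : ∃ e₁ ∈ E', ∃ e₂ ∈ E', e₁ ≠ e₂ ∧ ∀ v ∈ e₁, v ∉ e₂ := by
        by_contra hcon
        push_neg at hcon
        obtain ⟨e₁, e₂, e₃, h₁, h₂, h₃, h12, h13, h23⟩ :=
          Finset.two_lt_card_iff.mp (show 2 < E'.card by omega)
        have hR₁ : e₁ ∈ R := (Finset.mem_filter.mp h₁).1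
        have hR₂ : e₂ ∈ R := (Finset.mem_filter.mp h₂).1
        have hR₃ : e₃ ∈ R := (Finset.mem_filter.mp h₃).1
        obtain ⟨x, hx1, hx2⟩ := hcon e₁ h₁ e₂ h₂ h12
        obtain ⟨y, hy1, hy3⟩ := hcon e₁ h₁ e₃ h₃ h13
        obtain ⟨z, hz2, hz3⟩ := hcon e₂ h₂ e₃ h₃ h23
        have hxy : x ≠ y := by
          rintro rfl
          rcases hR.2 e₁ hR₁ e₂ hR₂ e₃ hR₃ x hx1 hx2 hy3 with h | h | h
          exacts [h12 h, h13 h, h23 h]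
        have hxz : x ≠ z := by
          rintro rfl
          rcases hR.2 e₁ hR₁ e₂ hR₂ e₃ hR₃ x hx1 hx2 hz3 with h | h | h
          exacts [h12 h, h13 h, h23 h]
        have hyz : y ≠ z := by
          rintro rfl
          rcases hR.2 e₁ hR₁ e₂ hR₂ e₃ hR₃ y hy1 hz2 hy3 with h | h | h
          exacts [h12 h, h13 h, h23 h]
        have he₁eq : e₁ = s(x, y) := sym2_eq_of_mem hx1 hy1 hxy
        have he₂eq : e₂ = s(x, z) := sym2_eq_of_mem hx2 hz2 hxz
        have he₃eq : e₃ = s(y, z) := sym2_eq_of_mem hy3 hz3 hyz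
        have hdx : degE R x = 2 := (Finset.mem_filter.mp h₁).2 x hx1
        have hcl : ∀ e ∈ R, (∃ w ∈ e, w ∈ ({x, y, z} : Finset V)) →
            ∀ w ∈ e, w ∈ ({x, y, z} : Finset V) := by
          intro e he hexx w hw
          obtain ⟨u, hu, huT⟩ := hexx
          have heq : e = e₁ ∨ e = e₂ ∨ e = e₃ := by
            rcases Finset.mem_insert.mp huT with rfl | huT'
            · rcases edges_at (hdeg2 u) hR₁ hR₂ h12 hx1 hx2 e he hu with h | h
              · exact Or.inl h
              · exact Or.inr (Or.inl h)
            · rcases Finset.mem_insert.mp huT' with rfl | huT''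
              · rcases edges_at (hdeg2 u) hR₁ hR₃ h13 hy1 hy3 e he hu with h | h
                · exact Or.inl h
                · exact Or.inr (Or.inr h)
              · rw [Finset.mem_singleton] at huT''
                subst huT''
                rcases edges_at (hdeg2 u) hR₂ hR₃ h23 hz2 hz3 e he hu with h | h
                · exact Or.inr (Or.inl h)
                · exact Or.inr (Or.inr h)
          rcases heq with rfl | rfl | rfl
          · rw [he₁eq] at hw
            rcases Sym2.mem_iff.mp hw with rfl | rfl <;> simp
          · rw [he₂eq] at hw
            rcases Sym2.mem_iff.mp hw with rfl | rfl <;> simp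
          · rw [he₃eq] at hw
            rcases Sym2.mem_iff.mp hw with rfl | rfl <;> simp
        have h3 := hclosT {x, y, z} hcl ⟨x, by simp, by omega⟩
        have hle3 : ({x, y, z} : Finset V).card ≤ 3 := by
          apply le_trans (Finset.card_insert_le _ _)
          have : ({y, z} : Finset V).card ≤ 2 := by
            apply le_trans (Finset.card_insert_le _ _)
            simp
          omega
        omega
      obtain ⟨e₁, hE1, e₂, hE2, hne12, hdisj12⟩ := hdisjpair
      have hRe₁ : e₁ ∈ R := (Finset.mem_filter.mp hE1).1
      have hRe₂ : e₂ ∈ R := (Finset.mem_filter.mp hE2).1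
      have hcond₁ : ∀ v ∈ e₁, degE R v = 2 := (Finset.mem_filter.mp hE1).2
      have hcond₂ : ∀ v ∈ e₂, degE R v = 2 := (Finset.mem_filter.mp hE2).2
      set R'' := (IntF.image (fun v => s(v, p v))) ∪ {e₁, e₂} with hR''
      have hinj : Set.InjOn (fun v => s(v, p v)) ↑IntF := by
        intro a ha b hb hab
        simp only [Sym2.eq_iff] at hab
        rcases hab with ⟨h1, -⟩ | ⟨h1, h2⟩
        · exact h1
        · exfalso
          exact hpnotI b (Finset.mem_coe.mp hb) (h1 ▸ Finset.mem_coe.mp ha)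
      have hdisjU : Disjoint (IntF.image (fun v => s(v, p v))) ({e₁, e₂} : Finset (Sym2 V)) := by
        rw [Finset.disjoint_left]
        rintro f hf hmem
        obtain ⟨v, hvI, rfl⟩ := Finset.mem_image.mp hf
        have hpvmem : p v ∈ s(v, p v) := Sym2.mem_mk_right _ _
        rcases Finset.mem_insert.mp hmem with heq | hmem'
        · have := hcond₁ (p v) (heq ▸ hpvmem)
          exact hpnotI v hvI (Finset.mem_filter.mpr ⟨Finset.mem_univ _, this⟩)
        · rw [Finset.mem_singleton] at hmem'
          have := hcond₂ (p v) (hmem' ▸ hpvmem)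
          exact hpnotI v hvI (Finset.mem_filter.mpr ⟨Finset.mem_univ _, this⟩)
      have hcard'' : R''.card = k + 1 := by
        rw [hR'', Finset.card_union_of_disjoint hdisjU,
          Finset.card_image_of_injOn hinj, Finset.card_pair hne12, hIcard]
        omega
      have hpack : IsTwoPacking G R'' := by
        apply isTwoPacking_of_degE
        · intro f hf
          rw [hR''] at hf
          rw [Finset.coe_union, Set.mem_union] at hf
          rcases hf with hf | hf
          · obtain ⟨v, hvI, rfl⟩ := Finset.mem_image.mp (Finset.mem_coe.mp hf)
            exact (hpadj v hvI).symm
          · rcases Finset.mem_insert.mp (Finset.mem_coe.mp hf) with rfl | hf'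
            · exact hR.1 (Finset.mem_coe.mpr hRe₁)
            · rw [Finset.mem_singleton] at hf'
              subst hf'
              exact hR.1 (Finset.mem_coe.mpr hRe₂)
        · intro w
          have hA : degE (IntF.image (fun v => s(v, p v))) w ≤ 1 := by
            apply Finset.card_le_one.mpr
            intro f₁ hf₁ f₂ hf₂
            rw [Finset.mem_filter] at hf₁ hf₂
            obtain ⟨v₁, hv₁, rfl⟩ := Finset.mem_image.mp hf₁.1
            obtain ⟨v₂, hv₂, rfl⟩ := Finset.mem_image.mp hf₂.1
            have hm₁ := hf₁.2
            have hm₂ := hf₂.2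
            have hveq : v₁ = v₂ := by
              rcases Sym2.mem_iff.mp hm₁ with rfl | h1
              · rcases Sym2.mem_iff.mp hm₂ with h2 | h2
                · exact h2
                · exfalso
                  exact hpnotI v₂ hv₂ (h2 ▸ hv₁)
              · rcases Sym2.mem_iff.mp hm₂ with h2 | h2
                · exfalso
                  exact hpnotI v₁ hv₁ (h1 ▸ (h2 ▸ hv₂))
                · have hadj1 : G.Adj (p v₁) v₁ := hpadj v₁ hv₁
                  have hpp : p v₁ = p v₂ := h1.symm.trans h2
                  rw [hpp] at hadj1
                  exact (hp v₂ hv₂ v₁).mp hadj1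
            rw [hveq]
          have hB : degE ({e₁, e₂} : Finset (Sym2 V)) w ≤ 1 := by
            apply Finset.card_le_one.mpr
            intro f₁ hf₁ f₂ hf₂
            rw [Finset.mem_filter] at hf₁ hf₂
            have g₁ := hf₁.1
            have g₂ := hf₂.1
            rcases Finset.mem_insert.mp g₁ with rfl | g₁'
            · rcases Finset.mem_insert.mp g₂ with rfl | g₂'
              · rfl
              · rw [Finset.mem_singleton] at g₂'
                subst g₂'
                exact absurd hf₂.2 (hdisj12 w hf₁.2)
            · rw [Finset.mem_singleton] at g₁'
              subst g₁'
              rcases Finset.mem_insert.mp g₂ with rfl | g₂'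
              · exact absurd hf₁.2 (hdisj12 w hf₂.2)
              · rw [Finset.mem_singleton] at g₂'
                subst g₂'
                rfl
          have hU : degE R'' w ≤ degE (IntF.image (fun v => s(v, p v))) w
              + degE ({e₁, e₂} : Finset (Sym2 V)) w := degE_union_le
          omega
      have hle := card_le_nu hpack
      omega

end main

/-- If `G` is a finite connected graph with `|E(G)| > ν₂(G)` and `ν₂(G) ≥ 5`,
and `R` is a maximum 2-packing of `G` such that `G[R]` is connected, then
`γ(G) ≤ ν₂(G) - 2`. -/
theorem dominationNumber_le_of_connected_edgeInduced {V : Type*} [Fintype V]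
    (G : SimpleGraph V) (hconn : G.Connected)
    (hE : twoPackingNumber G < G.edgeSet.ncard)
    (hnu : 5 ≤ twoPackingNumber G)
    (R : Finset (Sym2 V)) (hR : IsTwoPacking G R)
    (hmax : R.card = twoPackingNumber G)
    (hRconn : (edgeInducedSubgraph G ↑R).Connected) :
    dominationNumber G ≤ twoPackingNumber G - 2 := by
  classical
  have h5 : 5 ≤ R.card := by rw [hmax]; exact hnu
  obtain ⟨D, hdom, hcard⟩ := exists_dom hconn hR hmax h5 hRconn
  have hle : dominationNumber G ≤ D.card := Nat.sInf_le ⟨D, hdom, rfl⟩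
  rw [← hmax]
  omega
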